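/- For every singular cardinal κ there exist a signature Σ, an infinite set X of variables, and a logic ⊢ on Fm_Σ(X) such that the κ-ary part ⊢_κ (defined by Γ ⊢_κ φ iff Γ' ⊢ φ for some Γ' ⊆ Γ with |Γ'| < κ) fails to satisfy cut, and hence is not a consequence relation. Concretely, one may take Σ_0 = (⋃_{i∈I} M_i) ⊔ I ⊔ {∗} for pairwise disjoint sets M_i with |I| < κ, |M_i| < κ, |⋃_i M_i| = κ, Σ_n = ∅ for n ≥ 1, X countable, and ⊢ the consequence relation generated by the rules M_i ⊢ i (for i ∈ I) and I ⊢ ∗: then ⋃_i M_i ⊢_κ-derives each i ∈ I and I ⊢_κ ∗, but not ⋃_i M_i ⊢_κ ∗. -/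

import Mathlib

universe u

open Cardinal

/-- The `κ`-ary part of a relation between subsets and elements of `A`. -/
def kAryPart {A : Type u} (κ : Cardinal.{u}) (r : Set A → A → Prop) :
    Set A → A → Prop :=
  fun Γ φ => ∃ Γ' ⊆ Γ, Cardinal.mk ↥Γ' < κ ∧ r Γ' φ

/-- for every singular cardinal κ there exist a signature Σ (here: a
signature having only constant symbols, collected in the type `Consts`, so that
`Fm_Σ(X) = Consts ⊕ X` and the substitutions are the maps `Sum.elim Sum.inl σ` for
`σ : X → Consts ⊕ X`), a countably infinite set `X` of variables, and a logic `r`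
on `Fm_Σ(X)` (reflexive, monotone, satisfying cut, structural) such that the κ-ary
part of `r` fails to satisfy cut, hence is not a consequence relation. -/
lemma sing_decomp (κ : Cardinal.{u}) (hinf : Cardinal.aleph0 ≤ κ)
    (hsing : ¬κ.IsRegular) :
    ∃ (ι : Type u) (c : ι → Cardinal.{u}),
      Cardinal.mk ι < κ ∧ (∀ i, c i < κ) ∧ Cardinal.sum c = κ := by
  have hcof : κ.ord.cof < κ := by
    rcases lt_or_eq_of_le (Ordinal.cof_ord_le κ) with h | h
    · exact h
    · exact absurd ⟨hinf, h.ge⟩ hsing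
  obtain ⟨ι, f, hlsub, hι⟩ := Ordinal.exists_lsub_cof κ.ord
  refine ⟨ι, fun i => (f i).card + 1, hι ▸ hcof, fun i => ?_, le_antisymm ?_ ?_⟩
  · have : (f i).card < κ := by
      rw [← Cardinal.lt_ord]
      exact hlsub ▸ Ordinal.lt_lsub f i
    exact Cardinal.add_lt_of_lt hinf this (lt_of_lt_of_le Cardinal.one_lt_aleph0 hinf)
  · calc Cardinal.sum (fun i => (f i).card + 1) ≤ Cardinal.sum (fun _ : ι => κ) := by
          refine Cardinal.sum_le_sum _ _ fun i => ?_
          refine le_of_lt (Cardinal.add_lt_of_lt hinf ?_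
            (lt_of_lt_of_le Cardinal.one_lt_aleph0 hinf))
          rw [← Cardinal.lt_ord]; exact hlsub ▸ Ordinal.lt_lsub f i
      _ = Cardinal.mk ι * κ := by rw [Cardinal.sum_const']
      _ ≤ κ * κ := mul_le_mul_left (le_of_lt (hι ▸ hcof)) κ
      _ = κ := Cardinal.mul_eq_self hinf
  · have : κ = (Ordinal.lsub f).card := by rw [hlsub, Cardinal.card_ord]
    rw [this, Ordinal.lsub]
    calc (iSup (Order.succ ∘ f)).card
        ≤ Cardinal.sum (fun i => (Order.succ (f i)).card) := by
          exact Ordinal.card_iSup_le_sum_card _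
      _ = Cardinal.sum (fun i => (f i).card + 1) := by
          congr 1; ext i; rw [Ordinal.card_succ]

theorem stmt_2 (κ : Cardinal.{u}) (hinf : Cardinal.aleph0 ≤ κ)
    (hsing : ¬κ.IsRegular) :
    ∃ (Consts : Type u) (X : Type u), Countable X ∧ Infinite X ∧
      ∃ r : Set (Consts ⊕ X) → (Consts ⊕ X) → Prop,
        -- r is a logic:
        (∀ (Γ : Set (Consts ⊕ X)) (φ : Consts ⊕ X), φ ∈ Γ → r Γ φ) ∧
        (∀ (Γ Δ : Set (Consts ⊕ X)) (φ : Consts ⊕ X), Γ ⊆ Δ → r Γ φ → r Δ φ) ∧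
        (∀ (Γ Δ : Set (Consts ⊕ X)) (φ : Consts ⊕ X),
            r Γ φ → (∀ ψ ∈ Γ, r Δ ψ) → r Δ φ) ∧
        (∀ (σ : X → Consts ⊕ X) (Γ : Set (Consts ⊕ X)) (φ : Consts ⊕ X),
            r Γ φ → r (Sum.elim Sum.inl σ '' Γ) (Sum.elim Sum.inl σ φ)) ∧
        -- but its κ-ary part fails to satisfy cut:
        ∃ (Γ Δ : Set (Consts ⊕ X)) (φ : Consts ⊕ X),
          kAryPart κ r Γ φ ∧ (∀ ψ ∈ Γ, kAryPart κ r Δ ψ) ∧ ¬ kAryPart κ r Δ φ := by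
  
  obtain ⟨ι, c, hι, hc, hsum⟩ := sing_decomp κ hinf hsing
  -- the types of constants
  set M : ι → Type u := fun i => (c i).out with hM
  set Consts : Type u := ((Σ i : ι, M i) ⊕ ι) ⊕ PUnit.{u+1} with hConsts
  set X : Type u := ULift.{u} ℕ with hX
  set F := Consts ⊕ X with hF
  -- the three kinds of constant formulas
  set elem : (Σ i : ι, M i) → F := fun x => Sum.inl (Sum.inl (Sum.inl x)) with helem
  set tag : ι → F := fun i => Sum.inl (Sum.inl (Sum.inr i)) with htag
  set star : F := Sum.inl (Sum.inr PUnit.unit) with hstar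
  have elem_ne_tag : ∀ x i, elem x ≠ tag i := by
    intro x i h; injection h with h; injection h with h; injection h
  have elem_ne_star : ∀ x, elem x ≠ star := by
    intro x h; injection h with h; injection h
  have tag_ne_star : ∀ i, tag i ≠ star := by
    intro i h; injection h with h; injection h
  have elem_inj : Function.Injective elem := by
    intro x y h
    exact Sum.inl.inj (Sum.inl.inj (Sum.inl.inj h))
  refine ⟨Consts, X, inferInstance, inferInstance,
    fun Γ φ => φ ∈ Γ ∨ (∃ i, φ = tag i ∧ ∀ m : M i, elem ⟨i, m⟩ ∈ Γ) ∨
      (φ = star ∧ ∀ i, tag i ∈ Γ ∨ ∀ m : M i, elem ⟨i, m⟩ ∈ Γ),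
    ?_, ?_, ?_, ?_, ?_⟩
  · intro Γ φ h; exact Or.inl h
  · rintro Γ Δ φ hsub (h | ⟨i, rfl, h⟩ | ⟨rfl, h⟩)
    · exact Or.inl (hsub h)
    · exact Or.inr (Or.inl ⟨i, rfl, fun m => hsub (h m)⟩)
    · exact Or.inr (Or.inr ⟨rfl, fun i => (h i).imp (fun h' => hsub h')
        (fun h' m => hsub (h' m))⟩)
  · -- cut
    have key : ∀ (Δ : Set F) (x : Σ i : ι, M i),
        (elem x ∈ Δ ∨ (∃ i, elem x = tag i ∧ ∀ m : M i, elem ⟨i, m⟩ ∈ Δ) ∨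
          (elem x = star ∧ ∀ i, tag i ∈ Δ ∨ ∀ m : M i, elem ⟨i, m⟩ ∈ Δ)) → elem x ∈ Δ := by
      rintro Δ x (h | ⟨i, h, -⟩ | ⟨h, -⟩)
      · exact h
      · exact absurd h (elem_ne_tag x i)
      · exact absurd h (elem_ne_star x)
    rintro Γ Δ φ (h | ⟨i, rfl, h⟩ | ⟨rfl, h⟩) hall
    · exact hall φ h
    · exact Or.inr (Or.inl ⟨i, rfl, fun m => key Δ ⟨i, m⟩ (hall _ (h m))⟩)
    · refine Or.inr (Or.inr ⟨rfl, fun i => ?_⟩)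
      rcases h i with h' | h'
      · rcases hall _ h' with h'' | ⟨j, hj, h''⟩ | ⟨h'', -⟩
        · exact Or.inl h''
        · obtain rfl : i = j := by
            injection hj with hj; injection hj with hj; injection hj with hj
          exact Or.inr h''
        · exact absurd h'' (tag_ne_star i)
      · exact Or.inr fun m => key Δ ⟨i, m⟩ (hall _ (h' m))
  · -- structurality
    intro σ Γ φ h
    have fconst : ∀ x : Consts, Sum.elim Sum.inl σ (Sum.inl x : F) = Sum.inl x :=
      fun x => rfl
    rcases h with h | ⟨i, rfl, h⟩ | ⟨rfl, h⟩
    · exact Or.inl ⟨φ, h, rfl⟩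
    · exact Or.inr (Or.inl ⟨i, rfl, fun m => ⟨elem ⟨i, m⟩, h m, rfl⟩⟩)
    · exact Or.inr (Or.inr ⟨rfl, fun i => (h i).imp
        (fun h' => ⟨tag i, h', rfl⟩) (fun h' m => ⟨elem ⟨i, m⟩, h' m, rfl⟩)⟩)
  · -- counterexample
    refine ⟨Set.range tag, Set.range elem, star, ?_, ?_, ?_⟩
    · refine ⟨Set.range tag, le_refl _, ?_, ?_⟩
      · exact lt_of_le_of_lt Cardinal.mk_range_le hι
      · exact Or.inr (Or.inr ⟨rfl, fun i => Or.inl ⟨i, rfl⟩⟩)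
    · rintro ψ ⟨i, rfl⟩
      refine ⟨Set.range (fun m : M i => elem ⟨i, m⟩), ?_, ?_, ?_⟩
      · rintro x ⟨m, rfl⟩; exact ⟨⟨i, m⟩, rfl⟩
      · refine lt_of_le_of_lt Cardinal.mk_range_le ?_
        rw [hM]; rw [Cardinal.mk_out]; exact hc i
      · exact Or.inr (Or.inl ⟨i, rfl, fun m => ⟨m, rfl⟩⟩)
    · rintro ⟨Γ', hsub, hcard, h | ⟨i, hi, -⟩ | ⟨-, h⟩⟩
      · obtain ⟨x, hx⟩ := hsub h
        exact elem_ne_star x hx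
      · exact tag_ne_star i hi.symm
      · -- all elems are in Γ', so #Γ' ≥ κ
        have hall : ∀ x : Σ i : ι, M i, elem x ∈ Γ' := by
          rintro ⟨i, m⟩
          rcases h i with h' | h'
          · obtain ⟨x, hx⟩ := hsub h'
            exact absurd hx (elem_ne_tag x i)
          · exact h' m
        have : κ ≤ Cardinal.mk Γ' := by
          have hκ : κ = Cardinal.mk (Σ i : ι, M i) := by
            rw [hM]; rw [← hsum, Cardinal.sum]
          rw [hκ]
          exact Cardinal.mk_le_of_injective (f := fun x => (⟨elem x, hall x⟩ : Γ'))
            (fun x y hxy => elem_inj (by simpa using hxy))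
        exact absurd hcard (not_lt.mpr this)
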